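/- Let R be a left noetherian ring and let A and B be injective R-modules. If there exist injective R-linear maps f : A → B and g : B → A, then A and B are isomorphic as R-modules. -/

import Mathlib

universe u

/-- `E` is injective: every homomorphism `g : A → E` extends along every
injective linear map `f : A → B`. -/
def ModuleInjective (R : Type u) [Ring R] (E : Type u) [AddCommGroup E] [Module R E] : Prop :=
  ∀ (A B : Type u) [AddCommGroup A] [Module R A] [AddCommGroup B] [Module R B]
    (f : A →ₗ[R] B), Function.Injective f →
    ∀ g : A →ₗ[R] E, ∃ h : B →ₗ[R] E, h.comp f = g

variable {R : Type u} [Ring R]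

lemma mi_congr {E E' : Type u} [AddCommGroup E] [Module R E] [AddCommGroup E'] [Module R E']
    (h : ModuleInjective R E) (e : E ≃ₗ[R] E') : ModuleInjective R E' := by
  intro X Y _ _ _ _ f hf g
  obtain ⟨h', hh'⟩ := h X Y f hf (e.symm.toLinearMap ∘ₗ g)
  refine ⟨e.toLinearMap ∘ₗ h', ?_⟩
  rw [LinearMap.comp_assoc, hh']
  ext x; simp

lemma mi_fst {P Q : Type u} [AddCommGroup P] [Module R P] [AddCommGroup Q] [Module R Q]
    (h : ModuleInjective R (P × Q)) : ModuleInjective R P := by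
  intro X Y _ _ _ _ f hf g
  obtain ⟨h', hh'⟩ := h X Y f hf ((LinearMap.inl R P Q) ∘ₗ g)
  refine ⟨(LinearMap.fst R P Q) ∘ₗ h', ?_⟩
  rw [LinearMap.comp_assoc, hh']
  ext x; simp

lemma mi_snd {P Q : Type u} [AddCommGroup P] [Module R P] [AddCommGroup Q] [Module R Q]
    (h : ModuleInjective R (P × Q)) : ModuleInjective R Q :=
  mi_fst (mi_congr h (LinearEquiv.prodComm R P Q))

lemma mi_iff {E : Type u} [AddCommGroup E] [Module R E] :
    ModuleInjective R E ↔ Module.Injective R E := by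
  constructor
  · intro h
    exact ⟨fun X Y _ _ _ _ f hf g => by
      obtain ⟨h', hh'⟩ := h X Y f hf g
      exact ⟨h', fun x => by rw [← hh']; rfl⟩⟩
  · intro h X Y _ _ _ _ f hf g
    obtain ⟨h', hh'⟩ := h.out f hf g
    exact ⟨h', LinearMap.ext hh'⟩

/-- an injective submodule is a direct summand. -/
lemma mi_split {M : Type u} [AddCommGroup M] [Module R M] (p : Submodule R M)
    (hp : ModuleInjective R p) : ∃ q : Submodule R M, IsCompl p q := by
  obtain ⟨r, hr⟩ := hp p M p.subtype Subtype.val_injective LinearMap.id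
  exact ⟨LinearMap.ker r, LinearMap.isCompl_of_proj fun x => by
    have := LinearMap.congr_fun hr x; simpa using this⟩

/-- Bass–Papp, easy direction: over a left noetherian ring, a countable direct sum
of an injective module is injective. -/
lemma mi_finsupp [IsNoetherianRing R] {C : Type u} [AddCommGroup C] [Module R C]
    (hC : ModuleInjective R C) : ModuleInjective R (ℕ →₀ C) := by
  rw [mi_iff] at hC ⊢
  have hCB : Module.Baer R C := Module.Baer.of_injective hC
  apply Module.Baer.injective
  intro I g
  obtain ⟨s, hs⟩ : I.FG := IsNoetherian.noetherian I
  set S : Finset ℕ := s.attach.biUnion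
    (fun r => (g ⟨r.1, hs ▸ Submodule.subset_span r.2⟩).support) with hS
  have hsupp : ∀ x : I, (g x).support ⊆ S := by
    intro x n hn
    by_contra hnS
    exfalso
    apply Finsupp.mem_support_iff.1 hn
    have hK : (↑x : R) ∈ (LinearMap.ker ((Finsupp.lapply n) ∘ₗ g)).map I.subtype := by
      have : Ideal.span (↑s : Set R) ≤ (LinearMap.ker ((Finsupp.lapply n) ∘ₗ g)).map I.subtype := by
        rw [Ideal.span_le]
        intro r hr
        refine ⟨⟨r, hs ▸ Submodule.subset_span hr⟩, ?_, rfl⟩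
        rw [SetLike.mem_coe, LinearMap.mem_ker, LinearMap.comp_apply, Finsupp.lapply_apply]
        by_contra hne
        exact hnS (Finset.mem_biUnion.2 ⟨⟨r, hr⟩, Finset.mem_attach _ _,
          Finsupp.mem_support_iff.2 hne⟩)
      exact this (hs ▸ x.2)
    obtain ⟨y, hy, hxy⟩ := hK
    have : y = x := Subtype.val_injective hxy
    subst this
    simpa [Finsupp.mem_support_iff] using hy
  choose h' hh' using fun n => hCB I ((Finsupp.lapply n) ∘ₗ g)
  refine ⟨∑ n ∈ S, (Finsupp.lsingle n) ∘ₗ h' n, fun x mem => ?_⟩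
  have hL : (∑ n ∈ S, (Finsupp.lsingle n (M := C) (R := R)) ∘ₗ h' n) x
      = ∑ n ∈ S, Finsupp.single n ((g ⟨x, mem⟩) n) := by
    rw [LinearMap.sum_apply]
    refine Finset.sum_congr rfl fun n _ => ?_
    rw [LinearMap.comp_apply, hh' n x mem]
    rfl
  rw [hL]
  conv_rhs => rw [← Finsupp.sum_single (g ⟨x, mem⟩)]
  rw [Finsupp.sum_of_support_subset _ (hsupp ⟨x, mem⟩) _ (by simp)]

/-- Shift equivalence: `(ℕ →₀ M) ≃ M × (ℕ →₀ M)`. -/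
noncomputable def finsuppShift (M : Type u) [AddCommGroup M] [Module R M] :
    (ℕ →₀ M) ≃ₗ[R] M × (ℕ →₀ M) := by
  have lc : ∀ (v : ℕ →₀ M) (m : ℕ),
      Finsupp.lcomapDomain (R := R) Nat.succ Nat.succ_injective v m = v (m + 1) :=
    fun _ _ => rfl
  refine LinearEquiv.ofLinear
    (LinearMap.prod (Finsupp.lapply 0) (Finsupp.lcomapDomain Nat.succ Nat.succ_injective))
    (LinearMap.coprod (Finsupp.lsingle 0) (Finsupp.lmapDomain M R Nat.succ)) ?_ ?_
  · apply LinearMap.ext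
    rintro ⟨c, w⟩
    simp only [LinearMap.comp_apply, LinearMap.coprod_apply, LinearMap.prod_apply,
      LinearMap.id_apply, Function.prod, Finsupp.lsingle_apply, Finsupp.lmapDomain_apply,
      Finsupp.lapply_apply, map_add, Finsupp.add_apply]
    rw [Prod.mk_add_mk, Prod.mk.injEq]
    constructor
    · rw [Finsupp.single_eq_same, Finsupp.mapDomain_notin_range _ _ (by simp), add_zero]
    · rw [← map_add]
      ext m
      rw [lc, Finsupp.add_apply, Finsupp.single_eq_of_ne' (Nat.succ_ne_zero m).symm, zero_add,
        Finsupp.mapDomain_apply Nat.succ_injective]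
  · apply LinearMap.ext
    intro v
    simp only [LinearMap.comp_apply, LinearMap.prod_apply, Function.prod, LinearMap.coprod_apply,
      Finsupp.lapply_apply, Finsupp.lsingle_apply,
      Finsupp.lmapDomain_apply, LinearMap.id_apply]
    ext n
    rw [Finsupp.add_apply]
    cases n with
    | zero => rw [Finsupp.single_eq_same, Finsupp.mapDomain_notin_range _ _ (by simp), add_zero]
    | succ m =>
      rw [Finsupp.single_eq_of_ne' (Nat.succ_ne_zero m).symm, zero_add,
        Finsupp.mapDomain_apply Nat.succ_injective, lc]

/-- Distribution: `(ℕ →₀ (M × N)) ≃ (ℕ →₀ M) × (ℕ →₀ N)`. -/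
noncomputable def finsuppProd (M N : Type u) [AddCommGroup M] [Module R M]
    [AddCommGroup N] [Module R N] :
    (ℕ →₀ (M × N)) ≃ₗ[R] (ℕ →₀ M) × (ℕ →₀ N) := by
  refine LinearEquiv.ofLinear
    (LinearMap.prod (Finsupp.mapRange.linearMap (LinearMap.fst R M N))
      (Finsupp.mapRange.linearMap (LinearMap.snd R M N)))
    (LinearMap.coprod (Finsupp.mapRange.linearMap (LinearMap.inl R M N))
      (Finsupp.mapRange.linearMap (LinearMap.inr R M N))) ?_ ?_
  · apply LinearMap.ext
    rintro ⟨v, w⟩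
    simp only [LinearMap.comp_apply, LinearMap.coprod_apply, LinearMap.prod_apply, Pi.prod,
      map_add, Finsupp.mapRange.linearMap_apply, LinearMap.id_apply]
    rw [Prod.mk_add_mk, Prod.mk.injEq]
    constructor <;>
      · ext n
        simp [Finsupp.mapRange_apply, Finsupp.add_apply]
  · apply LinearMap.ext
    intro v
    simp only [LinearMap.comp_apply, LinearMap.prod_apply, Pi.prod, LinearMap.coprod_apply,
      Finsupp.mapRange.linearMap_apply, LinearMap.id_apply]
    ext n <;>
      simp [Finsupp.mapRange_apply, Finsupp.add_apply, Prod.fst_add, Prod.snd_add]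

/-- For disjoint submodules, `p × q ≃ p ⊔ q`. -/
noncomputable def disjointSupEquiv {M : Type u} [AddCommGroup M] [Module R M]
    (p q : Submodule R M) (hdis : Disjoint p q) : (↥p × ↥q) ≃ₗ[R] ↥(p ⊔ q : Submodule R M) := by
  have hc : Function.Injective (p.subtype.coprod q.subtype) := by
    rw [← LinearMap.ker_eq_bot, LinearMap.ker_eq_bot']
    rintro ⟨x, y⟩ hxy
    simp only [LinearMap.coprod_apply, Submodule.coe_subtype] at hxy
    have hx : (x : M) ∈ p ⊓ q := by
      constructor
      · exact x.2
      · have : (x : M) = -(y : M) := by linear_combination (norm := abel) hxy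
        rw [this]; exact neg_mem y.2
    rw [hdis.eq_bot] at hx
    have hx0 : (x : M) = 0 := hx
    have hy0 : (y : M) = 0 := by
      rw [hx0, zero_add] at hxy; exact hxy
    simp [Prod.ext_iff, ← Subtype.coe_inj, hx0, hy0]
  refine (LinearEquiv.ofInjective _ hc).trans (LinearEquiv.ofEq _ _ ?_)
  rw [LinearMap.range_coprod, Submodule.range_subtype, Submodule.range_subtype]

lemma phi_injective {A : Type u} [AddCommGroup A] [Module R A] (θ : A →ₗ[R] A)
    (hθ : Function.Injective θ) (C₀ : Submodule R A)
    (hcompl : IsCompl (LinearMap.range θ) C₀) :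
    Function.Injective (Finsupp.lsum ℕ (fun n => ((θ^n : A →ₗ[R] A)) ∘ₗ C₀.subtype) :
      (ℕ →₀ ↥C₀) →ₗ[R] A) := by
  set Φ : (ℕ →₀ ↥C₀) →ₗ[R] A :=
    Finsupp.lsum ℕ (fun n => ((θ^n : A →ₗ[R] A)) ∘ₗ C₀.subtype) with hΦ
  have hΦsum : ∀ (N : ℕ) (v : ℕ →₀ ↥C₀), v.support ⊆ Finset.range N →
      Φ v = ∑ n ∈ Finset.range N, (θ^n) (v n : A) := by
    intro N v hsup
    rw [hΦ, Finsupp.lsum_apply]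
    exact Finsupp.sum_of_support_subset v hsup _ (by simp)
  have key : ∀ (N : ℕ) (v : ℕ →₀ ↥C₀), v.support ⊆ Finset.range N → Φ v = 0 → v = 0 := by
    intro N
    induction N with
    | zero =>
      intro v hsup _
      rw [Finset.range_zero, Finset.subset_empty] at hsup
      exact Finsupp.support_eq_empty.1 hsup
    | succ N ih =>
      intro v hsup hv0
      rw [hΦsum (N+1) v hsup, Finset.sum_range_succ'] at hv0
      set π := Submodule.projectionOnto C₀ (LinearMap.range θ) hcompl.symm with hπ
      have hπθ : ∀ (i : ℕ) (x : A), π ((θ^(i+1)) x) = 0 := by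
        intro i x
        refine Submodule.linearProjOfIsCompl_apply_right' hcompl.symm ?_
        exact ⟨(θ^i) x, by rw [pow_succ']; rfl⟩
      have h0 : v 0 = 0 := by
        have hc := congrArg π hv0
        have hπ0 : π (0 : A) = 0 := map_zero π
        rw [hπ0, map_add, map_sum] at hc
        simp only [hπθ] at hc
        rw [Finset.sum_const_zero, zero_add, pow_zero, Module.End.one_apply,
          Submodule.projectionOnto_apply_left hcompl.symm] at hc
        exact hc
      have hsum0 : θ (∑ i ∈ Finset.range N, (θ^i) ((v (i+1) : ↥C₀) : A)) = 0 := by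
        rw [map_sum]
        have : ∀ i, θ ((θ^i) ((v (i+1) : ↥C₀) : A)) = (θ^(i+1)) ((v (i+1) : ↥C₀) : A) := by
          intro i; rw [pow_succ']; rfl
        simp only [this]
        rw [h0] at hv0
        simpa using hv0
      have hsum : ∑ i ∈ Finset.range N, (θ^i) ((v (i+1) : ↥C₀) : A) = 0 := by
        apply hθ; rw [hsum0, map_zero]
      set w : ℕ →₀ ↥C₀ := Finsupp.comapDomain Nat.succ v Nat.succ_injective.injOn with hw
      have hwv : ∀ i, w i = v (i+1) := fun i => rfl
      have hwsup : w.support ⊆ Finset.range N := by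
        intro i hi
        rw [Finsupp.mem_support_iff, hwv] at hi
        have : i + 1 ∈ v.support := Finsupp.mem_support_iff.2 hi
        have := hsup this
        rw [Finset.mem_range] at this ⊢
        omega
      have hw0 : w = 0 := by
        apply ih w hwsup
        rw [hΦsum N w hwsup]
        simpa only [hwv] using hsum
      ext n
      cases n with
      | zero => rw [h0]; rfl
      | succ i =>
        have : w i = 0 := by rw [hw0]; rfl
        rw [← hwv i, this]; rfl
  rw [← LinearMap.ker_eq_bot, LinearMap.ker_eq_bot']
  intro v hv
  refine key (v.support.sup id + 1) v ?_ hv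
  intro n hn
  rw [Finset.mem_range]
  have := Finset.le_sup (f := id) hn
  simp only [id_eq] at this
  omega

theorem stmt16 (R : Type u) [Ring R] [IsNoetherianRing R]
    (A B : Type u) [AddCommGroup A] [Module R A] [AddCommGroup B] [Module R B]
    (hA : ModuleInjective R A) (hB : ModuleInjective R B)
    (hex : (∃ f : A →ₗ[R] B, Function.Injective f) ∧ ∃ g : B →ₗ[R] A, Function.Injective g) :
    Nonempty (A ≃ₗ[R] B) := by
  obtain ⟨⟨f, hf⟩, ⟨g, hg⟩⟩ := hex
  set θ : A →ₗ[R] A := g ∘ₗ f with hθdef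
  have hθ : Function.Injective θ := hg.comp hf
  have ePθ : A ≃ₗ[R] ↥(LinearMap.range θ) := LinearEquiv.ofInjective θ hθ
  obtain ⟨C₀, hcompl⟩ := mi_split (LinearMap.range θ) (mi_congr hA ePθ)
  have eA : (↥(LinearMap.range θ) × ↥C₀) ≃ₗ[R] A :=
    Submodule.prodEquivOfIsCompl _ _ hcompl
  have hC₀ : ModuleInjective R ↥C₀ := mi_snd (mi_congr hA eA.symm)
  set B' := LinearMap.range g with hB'def
  have eB : B ≃ₗ[R] ↥B' := LinearEquiv.ofInjective g hg
  have hPB : LinearMap.range θ ≤ B' := LinearMap.range_comp_le_range f g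
  set D := B' ⊓ C₀ with hDdef
  have hdisj : Disjoint (LinearMap.range θ) D :=
    hcompl.disjoint.mono_right inf_le_right
  have hsupD : LinearMap.range θ ⊔ D = B' := by
    rw [hDdef, inf_comm, ← sup_inf_assoc_of_le _ hPB, hcompl.codisjoint.eq_top, top_inf_eq]
  have eB' : (↥(LinearMap.range θ) × ↥D) ≃ₗ[R] ↥B' :=
    (disjointSupEquiv _ _ hdisj).trans (LinearEquiv.ofEq _ _ hsupD)
  have hD : ModuleInjective R ↥D := mi_snd (mi_congr hB (eB.trans eB'.symm))
  have hDle : D ≤ C₀ := inf_le_right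
  set Dc : Submodule R ↥C₀ := D.comap C₀.subtype with hDcdef
  have eDc : ↥Dc ≃ₗ[R] ↥D := Submodule.comapSubtypeEquivOfLe hDle
  obtain ⟨C', hcomplC⟩ := mi_split Dc (mi_congr hD eDc.symm)
  have ρ : ↥C₀ ≃ₗ[R] (↥D × ↥C') :=
    (Submodule.prodEquivOfIsCompl Dc C' hcomplC).symm.trans
      (eDc.prodCongr (LinearEquiv.refl R ↥C'))
  set Φ : (ℕ →₀ ↥C₀) →ₗ[R] A :=
    Finsupp.lsum ℕ (fun n => ((θ^n : A →ₗ[R] A)) ∘ₗ C₀.subtype) with hΦdef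
  have hΦinj : Function.Injective Φ := phi_injective θ hθ C₀ hcompl
  have eG : (ℕ →₀ ↥C₀) ≃ₗ[R] ↥(LinearMap.range Φ) := LinearEquiv.ofInjective Φ hΦinj
  have hF : ModuleInjective R (ℕ →₀ ↥C₀) := mi_finsupp hC₀
  obtain ⟨E, hcomplG⟩ := mi_split (LinearMap.range Φ) (mi_congr hF eG)
  have eAG : (↥(LinearMap.range Φ) × ↥E) ≃ₗ[R] A :=
    Submodule.prodEquivOfIsCompl _ _ hcomplG
  -- A ≃ F × E where F = ℕ →₀ C₀
  have e1 : A ≃ₗ[R] ((ℕ →₀ ↥C₀) × ↥E) :=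
    eAG.symm.trans (eG.symm.prodCongr (LinearEquiv.refl R ↥E))
  -- F ≃ D × F
  have e2 : (ℕ →₀ ↥C₀) ≃ₗ[R] (↥D × (ℕ →₀ ↥C₀)) :=
    (Finsupp.mapRange.linearEquiv ρ).trans <|
      (finsuppProd ↥D ↥C').trans <|
        ((finsuppShift ↥D).prodCongr (LinearEquiv.refl R (ℕ →₀ ↥C'))).trans <|
          (LinearEquiv.prodAssoc R ↥D (ℕ →₀ ↥D) (ℕ →₀ ↥C')).trans <|
            (LinearEquiv.refl R ↥D).prodCongr <|
              ((finsuppProd ↥D ↥C').symm.trans (Finsupp.mapRange.linearEquiv ρ).symm)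
  -- D × A ≃ A
  have eDA : (↥D × A) ≃ₗ[R] A :=
    ((LinearEquiv.refl R ↥D).prodCongr e1).trans <|
      (LinearEquiv.prodAssoc R ↥D (ℕ →₀ ↥C₀) ↥E).symm.trans <|
        ((e2.symm.prodCongr (LinearEquiv.refl R ↥E)).trans e1.symm)
  -- B ≃ A
  have final : B ≃ₗ[R] A :=
    (eB.trans eB'.symm).trans <|
      ((ePθ.symm.prodCongr (LinearEquiv.refl R ↥D)).trans
        (LinearEquiv.prodComm R A ↥D)).trans eDA
  exact ⟨final.symm⟩
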